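/- Maxoids satisfy the semigraphoid decomposition/contraction property: for any weighted DAG (G,C) and pairwise disjoint sets I,J,K,L of vertices, I is C*-separated from JK given L if and only if I is C*-separated from J given L and I is C*-separated from K given JL. -/

import Mathlib

/-!  Common definitions: weighted DAGs, paths, critical paths,
critical DAGs and C*-separation, following Boege–Ferry–Hollering–Nowell,
"Polyhedral aspects of maxoids". -/

variable {V : Type*}

/-- `p` is a directed path (vertex list) from `i` to `j` in the digraph `E`. -/
def IsPath (E : V → V → Prop) (i j : V) (p : List V) : Prop :=
  p.head? = some i ∧ p.getLast? = some j ∧ List.Chain' E p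

/-- The weight of a path: the sum of the edge weights along consecutive vertices. -/
def pathWeight (c : V → V → ℝ) (p : List V) : ℝ :=
  ((p.zip p.tail).map fun q => c q.1 q.2).sum

/-- `p` is a critical (maximum-weight) path from `i` to `j`. -/
def IsCritical (E : V → V → Prop) (c : V → V → ℝ) (i j : V) (p : List V) : Prop :=
  IsPath E i j p ∧ ∀ q, IsPath E i j q → pathWeight c q ≤ pathWeight c p

/-- The internal vertices of a path (all but the two endpoints). -/
def internalVerts (p : List V) : List V := p.tail.dropLast

/-- Edge `i → j` of the critical DAG `D*(C,L)`: there is a directed `i`–`j`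
path in `G` and no critical `i`–`j` path has an internal vertex in `L`. -/
def critEdge (E : V → V → Prop) (c : V → V → ℝ) (L : Set V) (i j : V) : Prop :=
  (∃ p, IsPath E i j p) ∧
    ∀ p, IsCritical E c i j p → ∀ v ∈ internalVerts p, v ∉ L

/-- `i` and `j` are C*-connected given `L`: some path of one of the five
permitted shapes joins them in the critical DAG `D*(C,L)` (colliders must lie
in `L`, non-colliders outside `L`, at most one collider). -/
def starConn (E : V → V → Prop) (c : V → V → ℝ) (L : Set V) (i j : V) : Prop :=
  let D := critEdge E c L
  D i j ∨ D j i ∨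
  (∃ p, p ∉ L ∧ D p i ∧ D p j) ∨
  (∃ l, l ∈ L ∧ D i l ∧ D j l) ∨
  (∃ p l, p ∉ L ∧ l ∈ L ∧ D p i ∧ D p l ∧ D j l) ∨
  (∃ p l, p ∉ L ∧ l ∈ L ∧ D p j ∧ D p l ∧ D i l) ∨
  (∃ p q l, p ∉ L ∧ q ∉ L ∧ l ∈ L ∧ D p i ∧ D p l ∧ D q l ∧ D q j)

/-- C*-separation of two vertices given `L`. -/
def CSep (E : V → V → Prop) (c : V → V → ℝ) (L : Set V) (i j : V) : Prop :=
  ¬ starConn E c L i j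

/-- C*-connection of two sets of vertices given `L`. -/
def starConnSets (E : V → V → Prop) (c : V → V → ℝ) (L I J : Set V) : Prop :=
  ∃ i ∈ I, ∃ j ∈ J, starConn E c L i j

/-- C*-separation of two sets of vertices given `L`. -/
def CSepSets (E : V → V → Prop) (c : V → V → ℝ) (L I J : Set V) : Prop :=
  ¬ starConnSets E c L I J

/-- The digraph `E` is acyclic. -/
def IsAcyclic (E : V → V → Prop) : Prop := ∀ v, ¬ Relation.TransGen E v v

/-- A weight matrix is generic: between any two vertices the maximum-weight
path is unique whenever one exists. -/
def Generic (E : V → V → Prop) (c : V → V → ℝ) : Prop :=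
  ∀ i j p q, IsCritical E c i j p → IsCritical E c i j q → p = q

/-- The set of generic weight matrices inducing exactly the same critical
paths as `c`. -/
def sameCritSet (E : V → V → Prop) (c : V → V → ℝ) : Set (V → V → ℝ) :=
  {c' | Generic E c' ∧ ∀ i j p, IsCritical E c' i j p ↔ IsCritical E c i j p}

lemma pathWeight_cons_cons (c : V → V → ℝ) (a b : V) (l : List V) :
    pathWeight c (a :: b :: l) = c a b + pathWeight c (b :: l) := by
  simp [pathWeight]

lemma pathWeight_append (c : V → V → ℝ) (v : V) (l t : List V) :
    pathWeight c (l ++ v :: t) = pathWeight c (l ++ [v]) + pathWeight c (v :: t) := by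
  induction l with
  | nil => simp [pathWeight]
  | cons a l ih =>
    cases l with
    | nil => simp [pathWeight_cons_cons, pathWeight]
    | cons b l' =>
      simp only [List.cons_append, pathWeight_cons_cons] at *
      rw [ih]; ring

lemma IsPath.split {E : V → V → Prop} {a b v : V} {s t : List V}
    (h : IsPath E a b (s ++ v :: t)) (hs : s ≠ []) (ht : t ≠ []) :
    IsPath E a v (s ++ [v]) ∧ IsPath E v b (v :: t) := by
  obtain ⟨h1, h2, h3⟩ := h
  replace h3 := List.isChain_append.mp h3
  obtain ⟨hcs, hct, hlink⟩ := h3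
  rw [List.head?_append] at h1
  rw [List.getLast?_append] at h2
  have hvt : (v :: t).getLast? = some b := by
    cases htl : (v :: t).getLast? with
    | none => simp at htl
    | some x => rw [htl] at h2; simpa using h2
  refine ⟨⟨?_, ?_, ?_⟩, ⟨rfl, hvt, hct⟩⟩
  · rw [List.head?_append]
    cases hsh : s.head? with
    | none => exact absurd (List.head?_eq_none_iff.mp hsh) hs
    | some x => rw [hsh] at h1; simp at h1 ⊢; simpa using h1
  · simp
  · apply List.isChain_append.mpr
    refine ⟨hcs, List.isChain_singleton v, ?_⟩
    intro x hx y hy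
    simp at hy
    subst hy
    exact hlink x hx v (by simp)

lemma IsPath.glue {E : V → V → Prop} (c : V → V → ℝ) {a v b : V} {p q : List V}
    (hp : IsPath E a v p) (hq : IsPath E v b q) :
    IsPath E a b (p ++ q.tail) ∧
      pathWeight c (p ++ q.tail) = pathWeight c p + pathWeight c q := by
  obtain ⟨hp1, hp2, hp3⟩ := hp
  obtain ⟨hq1, hq2, hq3⟩ := hq
  have hqne : q ≠ [] := by rintro rfl; simp at hq1
  have hqeq : q = v :: q.tail := by
    cases q with
    | nil => simp at hq1
    | cons x l => simp at hq1; subst hq1; rfl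
  have hpd : p.dropLast ++ [v] = p := List.dropLast_append_getLast? v hp2
  have key : p ++ q.tail = p.dropLast ++ v :: q.tail := by
    rw [← hpd]; simp
  constructor
  · refine ⟨?_, ?_, ?_⟩
    · rw [List.head?_append, hp1]; rfl
    · rw [key, List.getLast?_append]
      have hvb : (v :: q.tail).getLast? = some b := by rw [← hqeq]; exact hq2
      rw [hvb]; rfl
    · apply List.isChain_append.mpr
      refine ⟨hp3, (hqeq ▸ hq3 : List.IsChain E (v :: q.tail)).tail, ?_⟩
      intro x hx y hy
      rw [hp2] at hx
      simp at hx
      subst hx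
      have := List.isChain_cons.mp (hqeq ▸ hq3 : List.IsChain E (v :: q.tail))
      exact this.1 y hy
  · rw [key, pathWeight_append, hpd, ← hqeq]

lemma internal_left {p u : List V} (hp : p ≠ []) (hu : u ≠ []) :
    ∀ x ∈ internalVerts p, x ∈ internalVerts (p ++ u) := by
  intro x hx
  unfold internalVerts at *
  rw [List.tail_append_of_ne_nil] <;> try exact hp
  rw [List.dropLast_append_of_ne_nil hu]
  exact List.mem_append_left _ (List.mem_of_mem_dropLast hx)

lemma internal_right {s q : List V} (hs : s ≠ []) :
    ∀ x ∈ internalVerts q, x ∈ internalVerts (s ++ q) := by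
  intro x hx
  unfold internalVerts at *
  have hq : q ≠ [] := by rintro rfl; simp at hx
  have hx' : x ∈ q.dropLast := by
    cases q with
    | nil => simp at hx
    | cons h tl =>
      cases tl with
      | nil => simp at hx
      | cons y l =>
        simp only [List.tail_cons] at hx
        exact List.mem_cons_of_mem _ hx
  rw [List.tail_append_of_ne_nil] <;> try exact hs
  rw [List.dropLast_append_of_ne_nil hq]
  exact List.mem_append_right _ hx'

lemma internal_split {a : V} {p : List V} (hp : p.head? = some a) {v : V}
    (hv : v ∈ internalVerts p) :
    ∃ s t, p = s ++ v :: t ∧ s ≠ [] ∧ t ≠ [] := by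
  cases p with
  | nil => simp at hp
  | cons x tl =>
    simp at hp; subst hp
    unfold internalVerts at hv
    simp only [List.tail_cons] at hv
    have htl : tl ≠ [] := by rintro rfl; simp at hv
    obtain ⟨u1, u2, h12⟩ := List.append_of_mem hv
    obtain ⟨z, hz⟩ : ∃ z, tl.getLast? = some z := by
      cases h : tl.getLast? with
      | none => exact absurd (List.getLast?_eq_none_iff.mp h) htl
      | some z => exact ⟨z, rfl⟩
    have htl2 : tl = (u1 ++ v :: u2) ++ [z] := by
      rw [← h12]; exact (List.dropLast_append_getLast? z hz).symm
    refine ⟨x :: u1, u2 ++ [z], ?_, by simp, by simp⟩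
    rw [htl2]; simp

lemma critEdge_mono {E : V → V → Prop} {c : V → V → ℝ} {L L' : Set V} {a b : V}
    (h : L ⊆ L') (hab : critEdge E c L' a b) : critEdge E c L a b :=
  ⟨hab.1, fun p hp v hv hvL => hab.2 p hp v hv (h hvL)⟩

lemma splitLemma {E : V → V → Prop} {c : V → V → ℝ} {L J : Set V} {a b : V}
    (hab : critEdge E c L a b) (hnot : ¬ critEdge E c (J ∪ L) a b) :
    ∃ v, v ∈ J ∧ critEdge E c L a v ∧ critEdge E c L v b := by
  obtain ⟨hex, hall⟩ := hab
  have hB : ¬ ∀ p, IsCritical E c a b p → ∀ v ∈ internalVerts p, v ∉ J ∪ L :=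
    fun hb => hnot ⟨hex, hb⟩
  push_neg at hB
  obtain ⟨p, hpcrit, v, hvint, hvJL⟩ := hB
  have hvL : v ∉ L := hall p hpcrit v hvint
  have hvJ : v ∈ J := by
    rcases (Set.mem_union v J L).mp hvJL with h | h
    · exact h
    · exact absurd h hvL
  obtain ⟨s, t, rfl, hs, ht⟩ := internal_split hpcrit.1.1 hvint
  obtain ⟨hp1, hp2⟩ := hpcrit.1.split hs ht
  have hw : pathWeight c (s ++ v :: t) = pathWeight c (s ++ [v]) + pathWeight c (v :: t) :=
    pathWeight_append c v s t
  refine ⟨v, hvJ, ⟨⟨_, hp1⟩, ?_⟩, ⟨⟨_, hp2⟩, ?_⟩⟩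
  · intro q hq x hxint hxL
    obtain ⟨hgp, hgw⟩ := hq.1.glue c hp2
    have hqne : q ≠ [] := by rintro rfl; have := hq.1.1; simp at this
    have hcrit : IsCritical E c a b (q ++ (v :: t).tail) := by
      refine ⟨hgp, fun r hr => ?_⟩
      have h1 := hpcrit.2 r hr
      have h2 : pathWeight c (s ++ [v]) ≤ pathWeight c q := hq.2 _ hp1
      rw [hgw]
      rw [hw] at h1
      linarith
    exact hall _ hcrit x (internal_left hqne ht x hxint) hxL
  · intro q hq x hxint hxL
    obtain ⟨hgp, hgw⟩ := hp1.glue c hq.1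
    have hqeq : q = v :: q.tail := by
      have := hq.1.1
      cases q with
      | nil => simp at this
      | cons y l => simp at this; subst this; rfl
    have hassoc : (s ++ [v]) ++ q.tail = s ++ q := by
      rw [List.append_assoc, List.singleton_append, ← hqeq]
    have hcrit : IsCritical E c a b ((s ++ [v]) ++ q.tail) := by
      refine ⟨hgp, fun r hr => ?_⟩
      have h1 := hpcrit.2 r hr
      have h2 : pathWeight c (v :: t) ≤ pathWeight c q := hq.2 _ hp2
      rw [hgw]
      rw [hw] at h1
      linarith
    rw [hassoc] at hcrit
    exact hall _ hcrit x (internal_right hs x hxint) hxL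

lemma starConn_iff (E : V → V → Prop) (c : V → V → ℝ) (L : Set V) (i j : V) :
    starConn E c L i j ↔
      critEdge E c L i j ∨ critEdge E c L j i ∨
      (∃ p, p ∉ L ∧ critEdge E c L p i ∧ critEdge E c L p j) ∨
      (∃ l, l ∈ L ∧ critEdge E c L i l ∧ critEdge E c L j l) ∨
      (∃ p l, p ∉ L ∧ l ∈ L ∧ critEdge E c L p i ∧ critEdge E c L p l ∧ critEdge E c L j l) ∨
      (∃ p l, p ∉ L ∧ l ∈ L ∧ critEdge E c L p j ∧ critEdge E c L p l ∧ critEdge E c L i l) ∨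
      (∃ p q l, p ∉ L ∧ q ∉ L ∧ l ∈ L ∧ critEdge E c L p i ∧ critEdge E c L p l ∧
        critEdge E c L q l ∧ critEdge E c L q j) := Iff.rfl

/-- the semigraphoid decomposition/contraction property. -/
theorem stmt9 (E : V → V → Prop) (c : V → V → ℝ) (I J K L : Set V)
    (hIJ : Disjoint I J) (hIK : Disjoint I K) (hIL : Disjoint I L)
    (hJK : Disjoint J K) (hJL : Disjoint J L) (hKL : Disjoint K L) :
    CSepSets E c L I (J ∪ K) ↔
      (CSepSets E c L I J ∧ CSepSets E c (J ∪ L) I K) := by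
  have notU : ∀ {x : V}, x ∉ J → x ∉ L → x ∉ J ∪ L :=
    fun {x} h1 h2 hx => ((Set.mem_union x J L).mp hx).elim h1 h2
  constructor
  · intro h
    constructor
    · rintro ⟨i, hi, j, hj, hc⟩
      exact h ⟨i, hi, j, Or.inl hj, hc⟩
    · rintro ⟨i, hi, k, hk, hc⟩
      apply h
      have mono : ∀ {a b : V}, critEdge E c (J ∪ L) a b → critEdge E c L a b :=
        fun h => critEdge_mono Set.subset_union_right h
      rw [starConn_iff] at hc
      refine ⟨i, hi, ?_⟩
      rcases hc with h1 | h1 | ⟨p, hp, h1, h2⟩ | ⟨l, hl, h1, h2⟩ |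
        ⟨p, l, hp, hl, h1, h2, h3⟩ | ⟨p, l, hp, hl, h1, h2, h3⟩ |
        ⟨p, q, l, hp, hq, hl, h1, h2, h3, h4⟩
      · exact ⟨k, Or.inr hk, (starConn_iff E c L i k).mpr (Or.inl (mono h1))⟩
      · exact ⟨k, Or.inr hk, (starConn_iff E c L i k).mpr (Or.inr (Or.inl (mono h1)))⟩
      · exact ⟨k, Or.inr hk, (starConn_iff E c L i k).mpr (Or.inr (Or.inr (Or.inl
          ⟨p, fun hx => hp (Set.mem_union_right J hx), mono h1, mono h2⟩)))⟩
      · rcases (Set.mem_union l J L).mp hl with hlJ | hlL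
        · exact ⟨l, Or.inl hlJ, (starConn_iff E c L i l).mpr (Or.inl (mono h1))⟩
        · exact ⟨k, Or.inr hk, (starConn_iff E c L i k).mpr (Or.inr (Or.inr (Or.inr (Or.inl
            ⟨l, hlL, mono h1, mono h2⟩))))⟩
      · rcases (Set.mem_union l J L).mp hl with hlJ | hlL
        · exact ⟨l, Or.inl hlJ, (starConn_iff E c L i l).mpr (Or.inr (Or.inr (Or.inl
            ⟨p, fun hx => hp (Set.mem_union_right J hx), mono h1, mono h2⟩)))⟩
        · exact ⟨k, Or.inr hk, (starConn_iff E c L i k).mpr (Or.inr (Or.inr (Or.inr (Or.inr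
            (Or.inl ⟨p, l, fun hx => hp (Set.mem_union_right J hx), hlL,
              mono h1, mono h2, mono h3⟩)))))⟩
      · rcases (Set.mem_union l J L).mp hl with hlJ | hlL
        · exact ⟨l, Or.inl hlJ, (starConn_iff E c L i l).mpr (Or.inl (mono h3))⟩
        · exact ⟨k, Or.inr hk, (starConn_iff E c L i k).mpr (Or.inr (Or.inr (Or.inr (Or.inr
            (Or.inr (Or.inl ⟨p, l, fun hx => hp (Set.mem_union_right J hx), hlL,
              mono h1, mono h2, mono h3⟩))))))⟩
      · rcases (Set.mem_union l J L).mp hl with hlJ | hlL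
        · exact ⟨l, Or.inl hlJ, (starConn_iff E c L i l).mpr (Or.inr (Or.inr (Or.inl
            ⟨p, fun hx => hp (Set.mem_union_right J hx), mono h1, mono h2⟩)))⟩
        · exact ⟨k, Or.inr hk, (starConn_iff E c L i k).mpr (Or.inr (Or.inr (Or.inr (Or.inr
            (Or.inr (Or.inr ⟨p, q, l, fun hx => hp (Set.mem_union_right J hx),
              fun hx => hq (Set.mem_union_right J hx), hlL,
              mono h1, mono h2, mono h3, mono h4⟩))))))⟩
  · rintro ⟨hJsep, hKsep⟩ ⟨i, hi, x, hx, hc⟩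
    rcases hx with hxJ | hk
    · exact hJsep ⟨i, hi, x, hxJ, hc⟩
    have noJ : ∀ j ∈ J, ¬ starConn E c L i j := fun j hj hcc => hJsep ⟨i, hi, j, hj, hcc⟩
    have noK : ¬ starConn E c (J ∪ L) i x := fun hcc => hKsep ⟨i, hi, x, hk, hcc⟩
    rw [starConn_iff] at hc
    rcases hc with h1 | h1 | ⟨p, hpL, hpi, hpk⟩ | ⟨l, hl, hil, hkl⟩ |
      ⟨p, l, hpL, hl, hpi, hpl, hkl⟩ | ⟨p, l, hpL, hl, hpk, hpl, hil⟩ |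
      ⟨p, q, l, hpL, hqL, hl, hpi, hpl, hql, hqk⟩
    · by_cases hd : critEdge E c (J ∪ L) i x
      · exact noK ((starConn_iff E c (J ∪ L) i x).mpr (Or.inl hd))
      · obtain ⟨v, hvJ, hiv, hvx⟩ := splitLemma h1 hd
        exact noJ v hvJ ((starConn_iff E c L i v).mpr (Or.inl hiv))
    · by_cases hd : critEdge E c (J ∪ L) x i
      · exact noK ((starConn_iff E c (J ∪ L) i x).mpr (Or.inr (Or.inl hd)))
      · obtain ⟨v, hvJ, hxv, hvi⟩ := splitLemma h1 hd
        exact noJ v hvJ ((starConn_iff E c L i v).mpr (Or.inr (Or.inl hvi)))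
    · by_cases hd1 : critEdge E c (J ∪ L) p i
      · by_cases hpJ : p ∈ J
        · exact noJ p hpJ ((starConn_iff E c L i p).mpr (Or.inr (Or.inl hpi)))
        · by_cases hd2 : critEdge E c (J ∪ L) p x
          · exact noK ((starConn_iff E c (J ∪ L) i x).mpr (Or.inr (Or.inr (Or.inl
              ⟨p, notU hpJ hpL, hd1, hd2⟩))))
          · obtain ⟨v, hvJ, hpv, hvx⟩ := splitLemma hpk hd2
            exact noJ v hvJ ((starConn_iff E c L i v).mpr (Or.inr (Or.inr (Or.inl
              ⟨p, hpL, hpi, hpv⟩))))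
      · obtain ⟨v, hvJ, hpv, hvi⟩ := splitLemma hpi hd1
        exact noJ v hvJ ((starConn_iff E c L i v).mpr (Or.inr (Or.inl hvi)))
    · by_cases hd1 : critEdge E c (J ∪ L) i l
      · by_cases hd2 : critEdge E c (J ∪ L) x l
        · exact noK ((starConn_iff E c (J ∪ L) i x).mpr (Or.inr (Or.inr (Or.inr (Or.inl
            ⟨l, Set.mem_union_right J hl, hd1, hd2⟩)))))
        · obtain ⟨v, hvJ, hxv, hvl⟩ := splitLemma hkl hd2
          exact noJ v hvJ ((starConn_iff E c L i v).mpr (Or.inr (Or.inr (Or.inr (Or.inl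
            ⟨l, hl, hil, hvl⟩)))))
      · obtain ⟨v, hvJ, hiv, hvl⟩ := splitLemma hil hd1
        exact noJ v hvJ ((starConn_iff E c L i v).mpr (Or.inl hiv))
    · by_cases hd1 : critEdge E c (J ∪ L) p i
      · by_cases hpJ : p ∈ J
        · exact noJ p hpJ ((starConn_iff E c L i p).mpr (Or.inr (Or.inl hpi)))
        · by_cases hd2 : critEdge E c (J ∪ L) p l
          · by_cases hd3 : critEdge E c (J ∪ L) x l
            · exact noK ((starConn_iff E c (J ∪ L) i x).mpr (Or.inr (Or.inr (Or.inr (Or.inr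
                (Or.inl ⟨p, l, notU hpJ hpL, Set.mem_union_right J hl, hd1, hd2, hd3⟩))))))
            · obtain ⟨v, hvJ, hxv, hvl⟩ := splitLemma hkl hd3
              exact noJ v hvJ ((starConn_iff E c L i v).mpr (Or.inr (Or.inr (Or.inr (Or.inr
                (Or.inl ⟨p, l, hpL, hl, hpi, hpl, hvl⟩))))))
          · obtain ⟨v, hvJ, hpv, hvl⟩ := splitLemma hpl hd2
            exact noJ v hvJ ((starConn_iff E c L i v).mpr (Or.inr (Or.inr (Or.inl
              ⟨p, hpL, hpi, hpv⟩))))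
      · obtain ⟨v, hvJ, hpv, hvi⟩ := splitLemma hpi hd1
        exact noJ v hvJ ((starConn_iff E c L i v).mpr (Or.inr (Or.inl hvi)))
    · by_cases hd1 : critEdge E c (J ∪ L) i l
      · by_cases hpJ : p ∈ J
        · exact noJ p hpJ ((starConn_iff E c L i p).mpr (Or.inr (Or.inr (Or.inr (Or.inl
            ⟨l, hl, hil, hpl⟩)))))
        · by_cases hd2 : critEdge E c (J ∪ L) p l
          · by_cases hd3 : critEdge E c (J ∪ L) p x
            · exact noK ((starConn_iff E c (J ∪ L) i x).mpr (Or.inr (Or.inr (Or.inr (Or.inr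
                (Or.inr (Or.inl ⟨p, l, notU hpJ hpL, Set.mem_union_right J hl,
                  hd3, hd2, hd1⟩)))))))
            · obtain ⟨v, hvJ, hpv, hvx⟩ := splitLemma hpk hd3
              exact noJ v hvJ ((starConn_iff E c L i v).mpr (Or.inr (Or.inr (Or.inr (Or.inr
                (Or.inr (Or.inl ⟨p, l, hpL, hl, hpv, hpl, hil⟩)))))))
          · obtain ⟨v, hvJ, hpv, hvl⟩ := splitLemma hpl hd2
            exact noJ v hvJ ((starConn_iff E c L i v).mpr (Or.inr (Or.inr (Or.inr (Or.inl
              ⟨l, hl, hil, hvl⟩)))))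
      · obtain ⟨v, hvJ, hiv, hvl⟩ := splitLemma hil hd1
        exact noJ v hvJ ((starConn_iff E c L i v).mpr (Or.inl hiv))
    · by_cases hd1 : critEdge E c (J ∪ L) p i
      · by_cases hpJ : p ∈ J
        · exact noJ p hpJ ((starConn_iff E c L i p).mpr (Or.inr (Or.inl hpi)))
        · by_cases hd2 : critEdge E c (J ∪ L) p l
          · by_cases hqJ : q ∈ J
            · exact noJ q hqJ ((starConn_iff E c L i q).mpr (Or.inr (Or.inr (Or.inr (Or.inr
                (Or.inl ⟨p, l, hpL, hl, hpi, hpl, hql⟩))))))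
            · by_cases hd3 : critEdge E c (J ∪ L) q l
              · by_cases hd4 : critEdge E c (J ∪ L) q x
                · exact noK ((starConn_iff E c (J ∪ L) i x).mpr (Or.inr (Or.inr (Or.inr
                    (Or.inr (Or.inr (Or.inr ⟨p, q, l, notU hpJ hpL, notU hqJ hqL,
                      Set.mem_union_right J hl, hd1, hd2, hd3, hd4⟩)))))))
                · obtain ⟨v, hvJ, hqv, hvx⟩ := splitLemma hqk hd4
                  exact noJ v hvJ ((starConn_iff E c L i v).mpr (Or.inr (Or.inr (Or.inr
                    (Or.inr (Or.inr (Or.inr ⟨p, q, l, hpL, hqL, hl,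
                      hpi, hpl, hql, hqv⟩)))))))
              · obtain ⟨v, hvJ, hqv, hvl⟩ := splitLemma hql hd3
                exact noJ v hvJ ((starConn_iff E c L i v).mpr (Or.inr (Or.inr (Or.inr (Or.inr
                  (Or.inl ⟨p, l, hpL, hl, hpi, hpl, hvl⟩))))))
          · obtain ⟨v, hvJ, hpv, hvl⟩ := splitLemma hpl hd2
            exact noJ v hvJ ((starConn_iff E c L i v).mpr (Or.inr (Or.inr (Or.inl
              ⟨p, hpL, hpi, hpv⟩))))
      · obtain ⟨v, hvJ, hpv, hvi⟩ := splitLemma hpi hd1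
        exact noJ v hvJ ((starConn_iff E c L i v).mpr (Or.inr (Or.inl hvi)))
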